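/- Let Θ be a finite set and c, c' : [0,1] → Θ measurable, with color vectors w_θ = λ(c^{−1}(θ)) and w'_θ = λ(c'^{−1}(θ)), where λ is Lebesgue measure. Then the infimum over measurable measure-preserving bijections σ : [0,1] → [0,1] of λ({x ∈ [0,1] : c(x) ≠ c'(σ(x))}) equals (1/2) Σ_{θ∈Θ} |w_θ − w'_θ|. In particular, the coloring distance δ_Θ between the equivalence classes of c and c' under measure-preserving bijections depends only on the color vectors w and w', and equals Σ_θ max(w_θ − w'_θ, 0). -/

import Mathlib

open MeasureTheory

namespace Stmt17Aux
open Set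

noncomputable section
open scoped Classical ENNReal

/-- floor at scale N -/
def flr (N : ℕ) (x : ℝ) : ℤ := ⌊(N:ℝ) * x⌋

/-- interval exchange map -/
def T (N : ℕ) (j : ℤ → ℤ) (x : ℝ) : ℝ := x + ((j (flr N x) : ℝ) - (flr N x : ℝ)) / N

variable {N : ℕ}

lemma flr_eq_iff {x : ℝ} {k : ℤ} (hN : 0 < N) :
    flr N x = k ↔ x ∈ Ico ((k:ℝ)/N) ((k+1)/N) := by
  have hN' : (0:ℝ) < N := by exact_mod_cast hN
  rw [flr, Int.floor_eq_iff, mem_Ico, div_le_iff₀ hN', lt_div_iff₀ hN']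
  constructor
  · rintro ⟨h1, h2⟩; constructor <;> push_cast at * <;> linarith
  · rintro ⟨h1, h2⟩; constructor <;> push_cast at * <;> linarith

lemma T_apply {x : ℝ} (j : ℤ → ℤ) : T N j x = x + ((j (flr N x) : ℝ) - (flr N x : ℝ)) / N := rfl

lemma flr_T (hN : 0 < N) (j : ℤ → ℤ) (x : ℝ) : flr N (T N j x) = j (flr N x) := by
  have hN' : (0:ℝ) < N := by exact_mod_cast hN
  set k := flr N x with hk
  have hx : x ∈ Ico ((k:ℝ)/N) ((k+1)/N) := (flr_eq_iff hN).1 rfl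
  rw [flr_eq_iff hN]
  simp only [mem_Ico] at hx ⊢
  rw [T_apply, ← hk]
  obtain ⟨h1, h2⟩ := hx
  rw [div_le_iff₀ hN'] at h1 ⊢
  rw [lt_div_iff₀ hN'] at h2 ⊢
  have key : ((x + ((j k : ℝ) - ↑k) / ↑N) * ↑N) = x * N + ((j k :ℝ) - ↑k) := by field_simp
  rw [key]
  constructor <;> linarith

lemma T_comp (hN : 0 < N) (j j' : ℤ → ℤ) (x : ℝ) : T N j' (T N j x) = T N (j' ∘ j) x := by
  show T N j x + ((j' (flr N (T N j x)):ℝ) - (flr N (T N j x):ℝ))/N = _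
  rw [flr_T hN]
  simp only [T, Function.comp]
  ring

lemma T_id (x : ℝ) : T N id x = x := by simp [T_apply]

lemma T_leftInv (hN : 0 < N) (e : Equiv.Perm ℤ) :
    Function.LeftInverse (T N ⇑e.symm) (T N ⇑e) := by
  intro x
  rw [T_comp hN]
  have : (⇑e.symm ∘ ⇑e) = id := by ext k; simp
  rw [this, T_id]

lemma T_bijective (hN : 0 < N) (e : Equiv.Perm ℤ) : Function.Bijective (T N ⇑e) := by
  refine ⟨(T_leftInv hN e).injective, fun y => ⟨T N ⇑e.symm y, ?_⟩⟩
  have := T_leftInv hN e.symm y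
  rwa [Equiv.symm_symm] at this

lemma T_measurable (j : ℤ → ℤ) : Measurable (T N j) := by
  have hg : Measurable (fun k : ℤ => (((j k) : ℝ) - (k:ℝ))/(N:ℝ)) := fun _ _ => trivial
  have hf : Measurable (flr N) := (measurable_const.mul measurable_id).floor
  exact measurable_id.add (hg.comp hf)

lemma measurable_flr (N : ℕ) : Measurable (flr N) := (measurable_const.mul measurable_id).floor

lemma fiber_eq (hN : 0 < N) (k : ℤ) : flr N ⁻¹' {k} = Ico ((k:ℝ)/N) (((k:ℝ)+1)/N) := by
  ext x; simp only [mem_preimage, mem_singleton_iff]; exact flr_eq_iff hN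

lemma volume_fiber (hN : 0 < N) (k : ℤ) : volume (flr N ⁻¹' {k}) = ENNReal.ofReal (1/N) := by
  rw [fiber_eq hN, Real.volume_Ico]
  congr 1
  have hN' : (0:ℝ) < N := by exact_mod_cast hN
  field_simp
  ring

lemma T_preimage_fiber (hN : 0 < N) (j : ℤ → ℤ) (k : ℤ) {S : Set ℝ} :
    T N j ⁻¹' S ∩ flr N ⁻¹' {k} = (fun x => x + (((j k):ℝ) - k)/N) ⁻¹' (S ∩ flr N ⁻¹' {j k}) := by
  have hN' : (0:ℝ) < N := by exact_mod_cast hN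
  ext x
  simp only [mem_inter_iff, mem_preimage, mem_singleton_iff]
  constructor
  · rintro ⟨hS, hk⟩
    have hT : T N j x = x + (((j k):ℝ) - k)/N := by rw [T_apply, hk]
    exact ⟨by rwa [← hT], by rw [← hT, flr_T hN, hk]⟩
  · rintro ⟨hS, hk'⟩
    have hx : flr N x = k := by
      have h1 := (flr_eq_iff hN).1 hk'
      rw [flr_eq_iff hN]
      simp only [mem_Ico] at h1 ⊢
      obtain ⟨ha, hb⟩ := h1
      rw [div_le_iff₀ hN'] at ha ⊢
      rw [lt_div_iff₀ hN'] at hb ⊢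
      have e1 : (x + ((j k :ℝ) - ↑k) / ↑N) * N = x * N + ((j k:ℝ) - ↑k) := by field_simp
      rw [e1] at ha hb
      push_cast at ha hb ⊢
      constructor <;> linarith
    have hT : T N j x = x + (((j k):ℝ) - k)/N := by rw [T_apply, hx]
    exact ⟨by rwa [hT], hx⟩

lemma volume_T_preimage_fiber (hN : 0 < N) (j : ℤ → ℤ) (k : ℤ) {S : Set ℝ} :
    volume (T N j ⁻¹' S ∩ flr N ⁻¹' {k}) = volume (S ∩ flr N ⁻¹' {j k}) := by
  rw [T_preimage_fiber hN j k, measure_preimage_add_right]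

/-- window -/
def J (N : ℕ) : Finset ℤ := Finset.Ico (0:ℤ) (N:ℤ)

lemma mem_Ico01_iff (hN : 0 < N) {x : ℝ} : x ∈ Ico (0:ℝ) 1 ↔ flr N x ∈ J N := by
  have hN' : (0:ℝ) < N := by exact_mod_cast hN
  simp only [J, Finset.mem_Ico, mem_Ico]
  constructor
  · rintro ⟨h0, h1⟩
    refine ⟨Int.floor_nonneg.2 (by positivity), ?_⟩
    exact Int.floor_lt.2 (by push_cast; nlinarith)
  · rintro ⟨ha, hb⟩
    have h := (flr_eq_iff hN).1 (rfl : flr N x = flr N x)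
    simp only [mem_Ico] at h
    obtain ⟨h1, h2⟩ := h
    have ha' : (0:ℝ) ≤ (flr N x : ℝ) := by exact_mod_cast ha
    have hb' : ((flr N x : ℝ) + 1) ≤ N := by exact_mod_cast hb
    constructor
    · calc (0:ℝ) ≤ (flr N x : ℝ)/N := by positivity
        _ ≤ x := h1
    · calc x < ((flr N x:ℝ)+1)/N := h2
        _ ≤ (N:ℝ)/N := by gcongr
        _ = 1 := div_self (ne_of_gt hN')

lemma Ico01_eq_biUnion (hN : 0 < N) :
    Ico (0:ℝ) 1 = ⋃ k ∈ J N, flr N ⁻¹' {k} := by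
  ext x
  simp only [mem_iUnion, mem_preimage, mem_singleton_iff, exists_prop]
  rw [mem_Ico01_iff hN]
  constructor
  · intro h; exact ⟨flr N x, h, rfl⟩
  · rintro ⟨k, hk, rfl⟩; exact hk

lemma volume_inter_Icc_eq_Ico (A : Set ℝ) :
    volume (A ∩ Icc (0:ℝ) 1) = volume (A ∩ Ico (0:ℝ) 1) := by
  apply le_antisymm
  · have hsub : A ∩ Icc (0:ℝ) 1 ⊆ (A ∩ Ico (0:ℝ) 1) ∪ {1} := by
      rintro x ⟨hA, h0, h1⟩
      rcases lt_or_eq_of_le h1 with h | h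
      · exact Or.inl ⟨hA, h0, h⟩
      · exact Or.inr (by simp [h])
    calc volume (A ∩ Icc (0:ℝ) 1) ≤ volume ((A ∩ Ico (0:ℝ) 1) ∪ {1}) := measure_mono hsub
      _ ≤ volume (A ∩ Ico (0:ℝ) 1) + volume ({1} : Set ℝ) := measure_union_le _ _
      _ = volume (A ∩ Ico (0:ℝ) 1) := by simp
  · exact measure_mono (inter_subset_inter_right _ Ico_subset_Icc_self)

lemma volume_inter_Ico_eq_sum (hN : 0 < N) {B : Set ℝ} (hB : MeasurableSet B) :
    volume (B ∩ Ico (0:ℝ) 1) = ∑ k ∈ J N, volume (B ∩ flr N ⁻¹' {k}) := by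
  have : B ∩ Ico (0:ℝ) 1 = ⋃ k ∈ J N, (B ∩ flr N ⁻¹' {k}) := by
    rw [Ico01_eq_biUnion hN, inter_iUnion₂]
  rw [this]
  apply measure_biUnion_finset
  · intro k _ m _ hkm
    apply Disjoint.mono inter_subset_right inter_subset_right
    simp only [disjoint_left, mem_preimage, mem_singleton_iff]
    rintro x h1 h2; exact hkm (h1 ▸ h2 ▸ rfl)
  · intro k _
    exact hB.inter ((measurable_flr N) (measurableSet_singleton k))


section Perm
variable {N : ℕ} (e : Equiv.Perm ℤ)

lemma symm_fix (he : ∀ k ∉ J N, e k = k) : ∀ k ∉ J N, e.symm k = k := by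
  intro k hk
  conv_lhs => rw [← he k hk]
  exact e.symm_apply_apply k

lemma perm_mem_J (he : ∀ k ∉ J N, e k = k) (k : ℤ) (hk : k ∈ J N) : e k ∈ J N := by
  by_contra h
  have h2 : e (e k) = e k := he (e k) h
  have := e.injective h2
  rw [this] at h
  exact h hk

lemma T_mapsTo (hN : 0 < N) (he : ∀ k ∉ J N, e k = k) :
    Set.MapsTo (T N ⇑e) (Icc (0:ℝ) 1) (Icc (0:ℝ) 1) := by
  intro x hx
  rcases lt_or_eq_of_le hx.2 with h | h
  · have hx' : x ∈ Ico (0:ℝ) 1 := ⟨hx.1, h⟩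
    have h1 : flr N x ∈ J N := (mem_Ico01_iff hN).1 hx'
    have h2 : flr N (T N ⇑e x) ∈ J N := by rw [flr_T hN]; exact perm_mem_J e he _ h1
    exact Ico_subset_Icc_self ((mem_Ico01_iff hN).2 h2)
  · have hfl : flr N x = (N:ℤ) := by
      rw [h, flr]
      simp
    have hNJ : (N:ℤ) ∉ J N := by simp [J]
    have : T N ⇑e x = x := by
      rw [T_apply, hfl, he _ hNJ]
      ring
    rw [this]; exact hx

lemma T_bijOn (hN : 0 < N) (he : ∀ k ∉ J N, e k = k) :
    Set.BijOn (T N ⇑e) (Icc (0:ℝ) 1) (Icc (0:ℝ) 1) := by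
  refine ⟨T_mapsTo e hN he, (T_bijective hN e).injective.injOn, ?_⟩
  intro y hy
  refine ⟨T N ⇑e.symm y, T_mapsTo e.symm hN (symm_fix e he) hy, ?_⟩
  have := T_leftInv hN e.symm y
  rwa [Equiv.symm_symm] at this

lemma T_measurePreserving (hN : 0 < N) (he : ∀ k ∉ J N, e k = k) :
    MeasurePreserving (T N ⇑e) (volume.restrict (Icc (0:ℝ) 1))
      (volume.restrict (Icc (0:ℝ) 1)) := by
  refine ⟨T_measurable _, ?_⟩
  apply Measure.ext
  intro S hS
  rw [Measure.map_apply (T_measurable _) hS, Measure.restrict_apply (T_measurable _ hS),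
    Measure.restrict_apply hS, volume_inter_Icc_eq_Ico, volume_inter_Icc_eq_Ico,
    volume_inter_Ico_eq_sum hN (T_measurable _ hS), volume_inter_Ico_eq_sum hN hS]
  have key : ∀ k ∈ J N, volume (T N ⇑e ⁻¹' S ∩ flr N ⁻¹' {k}) = volume (S ∩ flr N ⁻¹' {e k}) :=
    fun k _ => volume_T_preimage_fiber hN (⇑e) k
  rw [Finset.sum_congr rfl key]
  exact Finset.sum_nbij' (i := fun k => e k) (j := fun k => e.symm k)
    (fun k hk => perm_mem_J e he k hk)
    (fun k hk => perm_mem_J e.symm (symm_fix e he) k hk)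
    (fun k _ => e.symm_apply_apply k) (fun k _ => e.apply_symm_apply k)
    (fun k _ => rfl)

end Perm

section StepMeasure
variable {N : ℕ}

lemma volume_step (hN : 0 < N) (p : ℤ → Prop) :
    volume {x ∈ Icc (0:ℝ) 1 | p (flr N x)} =
      (((J N).filter p).card : ℝ≥0∞) * ENNReal.ofReal (1/N) := by
  have hmB : MeasurableSet {x : ℝ | p (flr N x)} :=
    measurable_flr N (MeasurableSet.of_discrete (s := {k | p k}))
  have hset : {x ∈ Icc (0:ℝ) 1 | p (flr N x)} = {x : ℝ | p (flr N x)} ∩ Icc (0:ℝ) 1 := by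
    ext x; simp [and_comm]
  rw [hset, volume_inter_Icc_eq_Ico, volume_inter_Ico_eq_sum hN hmB]
  have key : ∀ k ∈ J N, volume ({x : ℝ | p (flr N x)} ∩ flr N ⁻¹' {k}) =
      if p k then ENNReal.ofReal (1/N) else 0 := by
    intro k _
    by_cases hp : p k
    · rw [if_pos hp]
      have : {x : ℝ | p (flr N x)} ∩ flr N ⁻¹' {k} = flr N ⁻¹' {k} := by
        ext x
        simp only [mem_inter_iff, mem_setOf_eq, mem_preimage, mem_singleton_iff]
        exact ⟨fun h => h.2, fun h => ⟨h ▸ hp, h⟩⟩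
      rw [this, volume_fiber hN]
    · rw [if_neg hp]
      have : {x : ℝ | p (flr N x)} ∩ flr N ⁻¹' {k} = ∅ := by
        ext x
        simp only [mem_inter_iff, mem_setOf_eq, mem_preimage, mem_singleton_iff, mem_empty_iff_false,
          iff_false, not_and]
        rintro h1 rfl
        exact hp h1
      simp [this]
  rw [Finset.sum_congr rfl key, ← Finset.sum_filter, Finset.sum_const, nsmul_eq_mul]

end StepMeasure

lemma card_filter_swap {α : Type*} [DecidableEq α] {K : Finset α} {a b : α}
    (ha : a ∈ K) (hb : b ∈ K) (p : α → Prop) :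
    (K.filter fun k => p (Equiv.swap a b k)).card = (K.filter p).card := by
  have hmaps : ∀ k ∈ K, Equiv.swap a b k ∈ K := by
    intro k hk
    rcases eq_or_ne k a with rfl | hka
    · rwa [Equiv.swap_apply_left]
    rcases eq_or_ne k b with rfl | hkb
    · rwa [Equiv.swap_apply_right]
    · rwa [Equiv.swap_apply_of_ne_of_ne hka hkb]
  apply Finset.card_bij' (i := fun k _ => Equiv.swap a b k) (j := fun k _ => Equiv.swap a b k)
  · intro k hk
    simp only [Finset.mem_filter] at hk ⊢
    exact ⟨hmaps k hk.1, hk.2⟩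
  · intro k hk
    simp only [Finset.mem_filter, Equiv.swap_apply_self] at hk ⊢
    exact ⟨hmaps k hk.1, hk.2⟩
  · intro k _; exact Equiv.swap_apply_self a b k
  · intro k _; exact Equiv.swap_apply_self a b k

variable {Θ : Type} [Fintype Θ]

lemma comb : ∀ (n : ℕ) (K : Finset ℤ), K.card = n → ∀ (d d' : ℤ → Θ),
    ∃ e : Equiv.Perm ℤ, (∀ k ∉ K, e k = k) ∧
      ((K.filter fun k => d k ≠ d' (e k)).card ≤
        ∑ θ, ((K.filter fun k => d k = θ).card - (K.filter fun k => d' k = θ).card)) := by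
  intro n
  induction n with
  | zero =>
    intro K hK d d'
    rw [Finset.card_eq_zero] at hK
    subst hK
    exact ⟨Equiv.refl ℤ, fun k _ => rfl, by rw [Finset.subset_empty.1 (Finset.filter_subset _ (∅ : Finset ℤ))]; simp⟩
  | succ n IH =>
    intro K hK d d'
    have hne : K.Nonempty := Finset.card_pos.1 (by omega)
    obtain ⟨k₀, hk₀⟩ := hne
    set θ₀ := d k₀ with hθ₀
    -- choose k₁
    have hex : ∃ k₁, k₁ ∈ K ∧ ((∃ k ∈ K, d' k = θ₀) → d' k₁ = θ₀) ∧
        ((¬ ∃ k ∈ K, d' k = θ₀) → (K.filter fun k => d k = d' k₁).card <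
          (K.filter fun k => d' k = d' k₁).card ∧ d' k₁ ≠ θ₀) := by
      by_cases hgood : ∃ k ∈ K, d' k = θ₀
      · obtain ⟨k₁, hk₁, hd⟩ := hgood
        exact ⟨k₁, hk₁, fun _ => hd, fun h => absurd ⟨k₁, hk₁, hd⟩ h⟩
      · -- bad case: find θ₁ with n θ₁ < n' θ₁
        have hsum : ∑ θ, (K.filter fun k => d k = θ).card
            = ∑ θ, (K.filter fun k => d' k = θ).card := by
          rw [← Finset.card_eq_sum_card_fiberwise (fun x _ => Finset.mem_univ (d x)),
            ← Finset.card_eq_sum_card_fiberwise (fun x _ => Finset.mem_univ (d' x))]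
        have hn'θ₀ : (K.filter fun k => d' k = θ₀).card = 0 := by
          rw [Finset.card_eq_zero, Finset.filter_eq_empty_iff]
          intro k hk hdk
          exact hgood ⟨k, hk, hdk⟩
        have hnθ₀ : 0 < (K.filter fun k => d k = θ₀).card := by
          apply Finset.card_pos.2
          exact ⟨k₀, Finset.mem_filter.2 ⟨hk₀, rfl⟩⟩
        have hθ₁ : ∃ θ₁, (K.filter fun k => d k = θ₁).card < (K.filter fun k => d' k = θ₁).card := by
          by_contra hcon
          push_neg at hcon
          have : ∑ θ, (K.filter fun k => d' k = θ).card < ∑ θ, (K.filter fun k => d k = θ).card :=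
            Finset.sum_lt_sum (fun θ _ => hcon θ) ⟨θ₀, Finset.mem_univ _, by omega⟩
          omega
        obtain ⟨θ₁, hθ₁⟩ := hθ₁
        have hpos : 0 < (K.filter fun k => d' k = θ₁).card := by omega
        obtain ⟨k₁, hk₁⟩ := Finset.card_pos.1 hpos
        rw [Finset.mem_filter] at hk₁
        refine ⟨k₁, hk₁.1, fun h => absurd h hgood, fun _ => ?_⟩
        rw [hk₁.2]
        refine ⟨hθ₁, ?_⟩
        intro hcontra
        rw [hcontra] at hθ₁
        omega
    obtain ⟨k₁, hk₁, hgoodprop, hbadprop⟩ := hex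
    set K' := K.erase k₀ with hK'def
    have hK' : K'.card = n := by
      rw [hK'def, Finset.card_erase_of_mem hk₀, hK]
      omega
    set d'' := fun k => d' (Equiv.swap k₀ k₁ k) with hd''
    obtain ⟨e', he's, he'b⟩ := IH K' hK' d d''
    refine ⟨e'.trans (Equiv.swap k₀ k₁), ?_, ?_⟩
    · intro k hk
      have hk' : k ∉ K' := fun h => hk (Finset.mem_of_mem_erase h)
      have h1 : e' k = k := he's k hk'
      have hka : k ≠ k₀ := fun h => hk (h ▸ hk₀)
      have hkb : k ≠ k₁ := fun h => hk (h ▸ hk₁)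
      simp only [Equiv.trans_apply, h1]
      exact Equiv.swap_apply_of_ne_of_ne hka hkb
    · -- the cardinality bound
      have he'k₀ : e' k₀ = k₀ := he's k₀ (Finset.notMem_erase k₀ K)
      -- split filter over K = insert k₀ K'
      have hKins : K = insert k₀ K' := (Finset.insert_erase hk₀).symm
      set q := fun k => d k ≠ d' (Equiv.swap k₀ k₁ (e' k)) with hq
      have hq_eq : (K.filter fun k => d k ≠ d' (e'.trans (Equiv.swap k₀ k₁) k)) = K.filter q := rfl
      have hsplit : (K.filter q).card ≤ (K'.filter q).card + (if q k₀ then 1 else 0) := by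
        rw [hKins, Finset.filter_insert]
        split
        · exact (Finset.card_insert_le _ _).trans (by omega)
        · omega
      have hq' : K'.filter q = K'.filter (fun k => d k ≠ d'' (e' k)) := rfl
      -- counts
      have hm : ∀ θ, (K'.filter fun k => d k = θ).card
          = (K.filter fun k => d k = θ).card - (if d k₀ = θ then 1 else 0) := by
        intro θ
        rw [hK'def, Finset.filter_erase]
        by_cases h : d k₀ = θ
        · rw [if_pos h, Finset.card_erase_of_mem (Finset.mem_filter.2 ⟨hk₀, h⟩)]
        · rw [if_neg h, Finset.erase_eq_of_notMem
            (fun hmem : k₀ ∈ K.filter (fun k => d k = θ) => h (Finset.mem_filter.1 hmem).2)]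
          omega
      have hm' : ∀ θ, (K'.filter fun k => d'' k = θ).card
          = (K.filter fun k => d' k = θ).card - (if d' k₁ = θ then 1 else 0) := by
        intro θ
        rw [hK'def, Finset.filter_erase]
        have hswapcard : (K.filter fun k => d'' k = θ).card = (K.filter fun k => d' k = θ).card :=
          card_filter_swap hk₀ hk₁ (fun k => d' k = θ)
        have hd''k₀ : d'' k₀ = d' k₁ := by rw [hd'']; simp [Equiv.swap_apply_left]
        by_cases h : d'' k₀ = θ
        · rw [Finset.card_erase_of_mem (Finset.mem_filter.2 ⟨hk₀, h⟩), hswapcard,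
            if_pos (by rw [← hd''k₀]; exact h)]
        · rw [Finset.erase_eq_of_notMem
            (fun hmem : k₀ ∈ K.filter (fun k => d'' k = θ) => h (Finset.mem_filter.1 hmem).2), hswapcard,
            if_neg (by rw [← hd''k₀]; exact fun hc => h hc)]
          omega
      rw [hq_eq]
      by_cases hgood : ∃ k ∈ K, d' k = θ₀
      · -- good case
        have hd'k₁ : d' k₁ = θ₀ := hgoodprop hgood
        have hqk₀ : ¬ q k₀ := by
          rw [hq]
          simp only [he'k₀, Equiv.swap_apply_left, hd'k₁, ← hθ₀, ne_eq, not_not]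
        have hbound := he'b
        rw [← hq'] at hbound
        refine hsplit.trans ?_
        rw [if_neg hqk₀, add_zero]
        refine hbound.trans ?_
        apply Finset.sum_le_sum
        intro θ _
        rw [hm θ, hm' θ, hd'k₁, ← hθ₀]
        split <;> omega
      · -- bad case
        have hprop := hbadprop hgood
        set θ₁ := d' k₁ with hθ₁def
        obtain ⟨hlt, hne01⟩ := hprop
        have hn'θ₀ : (K.filter fun k => d' k = θ₀).card = 0 := by
          rw [Finset.card_eq_zero, Finset.filter_eq_empty_iff]
          intro k hk hdk
          exact hgood ⟨k, hk, hdk⟩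
        have hnθ₀ : 0 < (K.filter fun k => d k = θ₀).card :=
          Finset.card_pos.2 ⟨k₀, Finset.mem_filter.2 ⟨hk₀, rfl⟩⟩
        have hbound := he'b
        rw [← hq'] at hbound
        refine hsplit.trans ?_
        have hite : (if q k₀ then 1 else 0) ≤ 1 := by split <;> omega
        -- sum splitting at θ₀
        have key : ∑ θ, ((K'.filter fun k => d k = θ).card - (K'.filter fun k => d'' k = θ).card) + 1
            ≤ ∑ θ, ((K.filter fun k => d k = θ).card - (K.filter fun k => d' k = θ).card) := by
          rw [← Finset.sum_erase_add _ _ (Finset.mem_univ θ₀),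
            ← Finset.sum_erase_add _ _ (Finset.mem_univ θ₀)]
          have h1 : ∀ θ ∈ Finset.univ.erase θ₀,
              (K'.filter fun k => d k = θ).card - (K'.filter fun k => d'' k = θ).card
              ≤ (K.filter fun k => d k = θ).card - (K.filter fun k => d' k = θ).card := by
            intro θ hθ
            have hθne : θ ≠ θ₀ := Finset.ne_of_mem_erase hθ
            rw [hm θ, hm' θ, if_neg (fun h : d k₀ = θ => hθne (by rw [hθ₀, h]))]
            rcases eq_or_ne (d' k₁) θ with h | h
            · rw [if_pos h]
              have : (K.filter fun k => d k = θ).card < (K.filter fun k => d' k = θ).card := by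
                rw [← h]; exact hlt
              omega
            · rw [if_neg h]; omega
          have h2 : (K'.filter fun k => d k = θ₀).card - (K'.filter fun k => d'' k = θ₀).card + 1
              ≤ (K.filter fun k => d k = θ₀).card - (K.filter fun k => d' k = θ₀).card := by
            rw [hm θ₀, hm' θ₀, if_pos (by rw [hθ₀]), if_neg hne01]
            omega
          calc ∑ θ ∈ Finset.univ.erase θ₀, ((K'.filter fun k => d k = θ).card - (K'.filter fun k => d'' k = θ).card)
                + ((K'.filter fun k => d k = θ₀).card - (K'.filter fun k => d'' k = θ₀).card) + 1
              ≤ ∑ θ ∈ Finset.univ.erase θ₀, ((K.filter fun k => d k = θ).card - (K.filter fun k => d' k = θ).card)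
                + ((K.filter fun k => d k = θ₀).card - (K.filter fun k => d' k = θ₀).card) := by
                have := Finset.sum_le_sum h1
                omega
            _ = _ := rfl
        calc (K'.filter q).card + (if q k₀ then 1 else 0)
            ≤ ∑ θ, ((K'.filter fun k => d k = θ).card - (K'.filter fun k => d'' k = θ).card) + 1 := by
              omega
          _ ≤ _ := key


variable {Θ : Type} [Fintype Θ] [MeasurableSpace Θ] [MeasurableSingletonClass Θ]

lemma approx_one (c : ℝ → Θ) (hc : Measurable c) {ε : ℝ} (hε : 0 < ε) :
    ∃ δ₀ : ℝ, 0 < δ₀ ∧ ∀ N : ℕ, 0 < N → 1/(N:ℝ) < δ₀ →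
      ∃ d : ℤ → Θ, volume {x ∈ Icc (0:ℝ) 1 | c x ≠ d (flr N x)} ≤ ENNReal.ofReal ε := by
  have hΘ : Nonempty Θ := ⟨c 0⟩
  have hcard : 0 < Fintype.card Θ := Fintype.card_pos
  set m := Fintype.card Θ with hm
  set ε' := ε / m with hε'
  have hε'pos : 0 < ε' := div_pos hε (by exact_mod_cast hcard)
  -- measurable fibers
  have hA : ∀ θ : Θ, MeasurableSet (c ⁻¹' {θ} ∩ Icc (0:ℝ) 1) :=
    fun θ => (hc (measurableSet_singleton θ)).inter measurableSet_Icc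
  have hAfin : ∀ θ : Θ, volume (c ⁻¹' {θ} ∩ Icc (0:ℝ) 1) ≠ ⊤ := by
    intro θ
    refine ne_top_of_le_ne_top ?_ (measure_mono inter_subset_right)
    simp [Real.volume_Icc]
  have hK : ∀ θ : Θ, ∃ K ⊆ c ⁻¹' {θ} ∩ Icc (0:ℝ) 1, IsCompact K ∧
      volume ((c ⁻¹' {θ} ∩ Icc (0:ℝ) 1) \ K) < ENNReal.ofReal ε' := by
    intro θ
    exact (hA θ).exists_isCompact_diff_lt (hAfin θ)
      (by simp [ENNReal.ofReal_eq_zero]; linarith)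
  choose K hKsub hKcomp hKlt using hK
  -- disjointness of the K's
  have hKdisj : ∀ θ θ' : Θ, θ ≠ θ' → ∀ x, x ∈ K θ → x ∉ K θ' := by
    intro θ θ' hne x hx hx'
    have h1 := (hKsub θ hx).1
    have h2 := (hKsub θ' hx').1
    simp only [mem_preimage, mem_singleton_iff] at h1 h2
    exact hne (h1 ▸ h2 ▸ rfl)
  -- separation
  have hU : ∀ θ : Θ, ∃ δ > 0, Metric.thickening δ (K θ) ⊆ (⋃ θ' ∈ Finset.univ.erase θ, K θ')ᶜ := by
    intro θ
    apply (hKcomp θ).exists_thickening_subset_open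
    · rw [isOpen_compl_iff]
      apply isClosed_biUnion_finset
      exact fun θ' _ => (hKcomp θ').isClosed
    · intro x hx
      simp only [mem_compl_iff, mem_iUnion, not_exists]
      intro θ' hθ'
      exact fun hmem => hKdisj θ' θ (Finset.ne_of_mem_erase hθ') x hmem hx
  choose δ hδpos hδsub using hU
  refine ⟨Finset.univ.inf' (show (Finset.univ : Finset Θ).Nonempty from ⟨Classical.arbitrary Θ, Finset.mem_univ _⟩) δ, ?_, ?_⟩
  · rw [Finset.lt_inf'_iff]
    exact fun θ _ => hδpos θ
  intro N hN h1N
  set d : ℤ → Θ := fun k =>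
    if h : ∃ θ, ((flr N ⁻¹' {k}) ∩ K θ).Nonempty then h.choose else Classical.arbitrary Θ
    with hd
  refine ⟨d, ?_⟩
  have key : ∀ θ : Θ, ∀ x ∈ K θ, d (flr N x) = θ := by
    intro θ x hx
    set k := flr N x with hk
    have hex : ∃ θ', ((flr N ⁻¹' {k}) ∩ K θ').Nonempty :=
      ⟨θ, x, by simp [hk], hx⟩
    rw [hd]
    simp only [dif_pos hex]
    set θh := hex.choose with hθh
    obtain ⟨y, hyk, hyK⟩ := hex.choose_spec
    by_contra hne
    -- x and y are both in the fiber, so close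
    have hxk : x ∈ flr N ⁻¹' {k} := by simp [hk]
    rw [fiber_eq hN] at hxk hyk
    have hdist : dist x y < 1/N := by
      rw [Real.dist_eq, abs_lt]
      simp only [mem_Ico] at hxk hyk
      have hN' : (0:ℝ) < N := by exact_mod_cast hN
      constructor
      · have : ((k:ℝ)+1)/N - (k:ℝ)/N = 1/N := by field_simp; ring
        nlinarith [hxk.1, hyk.2, hxk.2, hyk.1]
      · have : ((k:ℝ)+1)/N - (k:ℝ)/N = 1/N := by field_simp; ring
        nlinarith [hxk.1, hyk.2, hxk.2, hyk.1]
    have hthick : x ∈ Metric.thickening (δ θh) (K θh) := by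
      rw [Metric.mem_thickening_iff]
      refine ⟨y, hyK, lt_of_lt_of_le (lt_of_lt_of_le hdist h1N.le) ?_⟩
      exact Finset.inf'_le δ (Finset.mem_univ θh)
    have := hδsub θh hthick
    simp only [mem_compl_iff, mem_iUnion, not_exists] at this
    exact this θ (Finset.mem_erase.2 ⟨hne ∘ Eq.symm ∘ id, Finset.mem_univ θ⟩) hx
  -- now the measure bound
  have hsub : {x ∈ Icc (0:ℝ) 1 | c x ≠ d (flr N x)} ⊆
      ⋃ θ ∈ (Finset.univ : Finset Θ), ((c ⁻¹' {θ} ∩ Icc (0:ℝ) 1) \ K θ) := by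
    rintro x ⟨hxI, hxne⟩
    simp only [mem_iUnion, exists_prop]
    refine ⟨c x, Finset.mem_univ _, ⟨by simp, hxI⟩, ?_⟩
    intro hxK
    exact hxne (key (c x) x hxK).symm
  calc volume {x ∈ Icc (0:ℝ) 1 | c x ≠ d (flr N x)}
      ≤ volume (⋃ θ ∈ (Finset.univ : Finset Θ), ((c ⁻¹' {θ} ∩ Icc (0:ℝ) 1) \ K θ)) :=
        measure_mono hsub
    _ ≤ ∑ θ : Θ, volume ((c ⁻¹' {θ} ∩ Icc (0:ℝ) 1) \ K θ) := measure_biUnion_finset_le _ _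
    _ ≤ ∑ _θ : Θ, ENNReal.ofReal ε' := Finset.sum_le_sum (fun θ _ => (hKlt θ).le)
    _ = m • ENNReal.ofReal ε' := by rw [Finset.sum_const, Finset.card_univ]
    _ = ENNReal.ofReal (m * ε') := by
        rw [nsmul_eq_mul, ← ENNReal.ofReal_natCast m, ← ENNReal.ofReal_mul (by positivity)]
    _ = ENNReal.ofReal ε := by
        congr 1
        rw [hε']
        field_simp



section MainLemmas
variable {Θ : Type} [Fintype Θ] [MeasurableSpace Θ] [MeasurableSingletonClass Θ]

lemma measurableSet_ne' {f g : ℝ → Θ} (hf : Measurable f) (hg : Measurable g) :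
    MeasurableSet {x | f x ≠ g x} := by
  have : {x | f x = g x} = ⋃ θ ∈ (Finset.univ : Finset Θ), (f ⁻¹' {θ} ∩ g ⁻¹' {θ}) := by
    ext x
    simp only [mem_setOf_eq, mem_iUnion, mem_inter_iff, mem_preimage, mem_singleton_iff,
      Finset.mem_univ, exists_prop, true_and]
    exact ⟨fun h => ⟨g x, h, rfl⟩, fun ⟨θ, h1, h2⟩ => h1.trans h2.symm⟩
  have hm : MeasurableSet {x | f x = g x} := by
    rw [this]
    exact (Finset.univ : Finset Θ).measurableSet_biUnion
      (fun θ _ => (hf (measurableSet_singleton θ)).inter (hg (measurableSet_singleton θ)))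
  have : {x | f x ≠ g x} = {x | f x = g x}ᶜ := rfl
  rw [this]
  exact hm.compl

lemma vol_finite (A : Set ℝ) : volume (A ∩ Icc (0:ℝ) 1) ≠ ⊤ := by
  refine ne_top_of_le_ne_top ?_ (measure_mono inter_subset_right)
  simp [Real.volume_Icc]

/-- generic: sets {x ∈ Icc | f x = θ} vs {x ∈ Icc | g x = θ} -/
lemma sum_abs_le {f g : ℝ → Θ} (hf : Measurable f) (hg : Measurable g) :
    ∑ θ : Θ, |(volume {x ∈ Icc (0:ℝ) 1 | f x = θ}).toReal
      - (volume {x ∈ Icc (0:ℝ) 1 | g x = θ}).toReal|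
      ≤ 2 * (volume {x ∈ Icc (0:ℝ) 1 | f x ≠ g x}).toReal := by
  set G := {x ∈ Icc (0:ℝ) 1 | f x ≠ g x} with hG
  have hGsub : G ⊆ Icc 0 1 := fun x hx => hx.1
  have hGm : MeasurableSet G := by
    have : G = {x | f x ≠ g x} ∩ Icc 0 1 := by ext x; exact ⟨fun h => ⟨h.2, h.1⟩, fun h => ⟨h.2, h.1⟩⟩
    rw [this]; exact (measurableSet_ne' hf hg).inter measurableSet_Icc
  set E : Θ → Set ℝ := fun θ => {x ∈ Icc (0:ℝ) 1 | f x = θ} with hE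
  set A : Θ → Set ℝ := fun θ => {x ∈ Icc (0:ℝ) 1 | g x = θ} with hA
  have hEm : ∀ θ, MeasurableSet (E θ) := by
    intro θ
    have : E θ = f ⁻¹' {θ} ∩ Icc 0 1 := by
      ext x; simp only [hE, mem_setOf_eq, mem_inter_iff, mem_preimage, mem_singleton_iff]; tauto
    rw [this]; exact (hf (measurableSet_singleton θ)).inter measurableSet_Icc
  have hAm : ∀ θ, MeasurableSet (A θ) := by
    intro θ
    have : A θ = g ⁻¹' {θ} ∩ Icc 0 1 := by
      ext x; simp only [hA, mem_setOf_eq, mem_inter_iff, mem_preimage, mem_singleton_iff]; tauto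
    rw [this]; exact (hg (measurableSet_singleton θ)).inter measurableSet_Icc
  have hfinE : ∀ θ, volume (E θ) ≠ ⊤ := fun θ =>
    ne_top_of_le_ne_top (vol_finite univ) (measure_mono (fun x hx => ⟨⟨⟩, hx.1⟩))
  have hfinA : ∀ θ, volume (A θ) ≠ ⊤ := fun θ =>
    ne_top_of_le_ne_top (vol_finite univ) (measure_mono (fun x hx => ⟨⟨⟩, hx.1⟩))
  have hfinG : volume G ≠ ⊤ :=
    ne_top_of_le_ne_top (vol_finite univ) (measure_mono (fun x hx => ⟨⟨⟩, hx.1⟩))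
  -- pointwise bound
  have hpt : ∀ θ, |(volume (E θ)).toReal - (volume (A θ)).toReal|
      ≤ (volume (E θ \ A θ)).toReal + (volume (A θ \ E θ)).toReal := by
    intro θ
    have h1 : volume (E θ ∩ A θ) + volume (E θ \ A θ) = volume (E θ) :=
      measure_inter_add_diff (E θ) (hAm θ)
    have h2 : volume (A θ ∩ E θ) + volume (A θ \ E θ) = volume (A θ) :=
      measure_inter_add_diff (A θ) (hEm θ)
    have hcomm : volume (E θ ∩ A θ) = volume (A θ ∩ E θ) := by rw [inter_comm]
    have f1 : volume (E θ ∩ A θ) ≠ ⊤ := ne_top_of_le_ne_top (hfinE θ) (measure_mono inter_subset_left)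
    have f2 : volume (E θ \ A θ) ≠ ⊤ := ne_top_of_le_ne_top (hfinE θ) (measure_mono diff_subset)
    have f3 : volume (A θ \ E θ) ≠ ⊤ := ne_top_of_le_ne_top (hfinA θ) (measure_mono diff_subset)
    have e1 : (volume (E θ)).toReal = (volume (E θ ∩ A θ)).toReal + (volume (E θ \ A θ)).toReal := by
      rw [← h1, ENNReal.toReal_add f1 f2]
    have e2 : (volume (A θ)).toReal = (volume (E θ ∩ A θ)).toReal + (volume (A θ \ E θ)).toReal := by
      rw [← h2, ENNReal.toReal_add (hcomm ▸ f1) f3, hcomm]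
    rw [e1, e2]
    rw [abs_le]
    have p2 : (0:ℝ) ≤ (volume (E θ \ A θ)).toReal := ENNReal.toReal_nonneg
    have p3 : (0:ℝ) ≤ (volume (A θ \ E θ)).toReal := ENNReal.toReal_nonneg
    constructor <;> linarith
  -- sums of diffs bounded by vol G
  have hsumE : ∑ θ : Θ, volume (E θ \ A θ) ≤ volume G := by
    rw [← measure_biUnion_finset (f := fun θ => E θ \ A θ)]
    · apply measure_mono
      intro x hx
      simp only [mem_iUnion, exists_prop] at hx
      obtain ⟨θ, _, ⟨hxI, hxf⟩, hxA⟩ := hx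
      refine ⟨hxI, ?_⟩
      intro heq
      exact hxA ⟨hxI, by rw [← heq, hxf]⟩
    · intro θ _ θ' _ hne
      apply Disjoint.mono diff_subset diff_subset
      rw [disjoint_left]
      rintro x ⟨_, h1⟩ ⟨_, h2⟩
      exact hne (h1 ▸ h2 ▸ rfl)
    · exact fun θ _ => (hEm θ).diff (hAm θ)
  have hsumA : ∑ θ : Θ, volume (A θ \ E θ) ≤ volume G := by
    rw [← measure_biUnion_finset (f := fun θ => A θ \ E θ)]
    · apply measure_mono
      intro x hx
      simp only [mem_iUnion, exists_prop] at hx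
      obtain ⟨θ, _, ⟨hxI, hxg⟩, hxE⟩ := hx
      refine ⟨hxI, ?_⟩
      intro heq
      exact hxE ⟨hxI, by rw [heq, hxg]⟩
    · intro θ _ θ' _ hne
      apply Disjoint.mono diff_subset diff_subset
      rw [disjoint_left]
      rintro x ⟨_, h1⟩ ⟨_, h2⟩
      exact hne (h1 ▸ h2 ▸ rfl)
    · exact fun θ _ => (hAm θ).diff (hEm θ)
  have hsumE' : ∑ θ : Θ, (volume (E θ \ A θ)).toReal ≤ (volume G).toReal := by
    rw [← ENNReal.toReal_sum (fun θ _ => ne_top_of_le_ne_top (hfinE θ) (measure_mono diff_subset))]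
    exact ENNReal.toReal_mono hfinG hsumE
  have hsumA' : ∑ θ : Θ, (volume (A θ \ E θ)).toReal ≤ (volume G).toReal := by
    rw [← ENNReal.toReal_sum (fun θ _ => ne_top_of_le_ne_top (hfinA θ) (measure_mono diff_subset))]
    exact ENNReal.toReal_mono hfinG hsumA
  calc ∑ θ : Θ, |(volume (E θ)).toReal - (volume (A θ)).toReal|
      ≤ ∑ θ : Θ, ((volume (E θ \ A θ)).toReal + (volume (A θ \ E θ)).toReal) :=
        Finset.sum_le_sum (fun θ _ => hpt θ)
    _ = ∑ θ : Θ, (volume (E θ \ A θ)).toReal + ∑ θ : Θ, (volume (A θ \ E θ)).toReal :=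
        Finset.sum_add_distrib
    _ ≤ 2 * (volume G).toReal := by linarith

end MainLemmas


section LowerBound
variable {Θ : Type} [Fintype Θ] [MeasurableSpace Θ] [MeasurableSingletonClass Θ]

lemma lower_bound (c c' : ℝ → Θ) (hc : Measurable c) (hc' : Measurable c')
    (σ : ℝ → ℝ)
    (hmp : MeasurePreserving σ (volume.restrict (Icc (0:ℝ) 1))
      (volume.restrict (Icc (0:ℝ) 1))) :
    ∑ θ : Θ, |(volume (c ⁻¹' {θ} ∩ Icc (0:ℝ) 1)).toReal
      - (volume (c' ⁻¹' {θ} ∩ Icc (0:ℝ) 1)).toReal|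
    ≤ 2 * (volume {x ∈ Icc (0:ℝ) 1 | c x ≠ c' (σ x)}).toReal := by
  set D := {x ∈ Icc (0:ℝ) 1 | c x ≠ c' (σ x)} with hD
  have hσm : Measurable σ := hmp.measurable
  have hDm : MeasurableSet D := by
    have : D = {x | c x ≠ c' (σ x)} ∩ Icc 0 1 := by ext x; exact ⟨fun h => ⟨h.2, h.1⟩, fun h => ⟨h.2, h.1⟩⟩
    rw [this]
    exact (measurableSet_ne' hc (hc'.comp hσm)).inter measurableSet_Icc
  set A : Θ → Set ℝ := fun θ => c ⁻¹' {θ} ∩ Icc 0 1 with hA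
  set B : Θ → Set ℝ := fun θ => (fun x => c' (σ x)) ⁻¹' {θ} ∩ Icc 0 1 with hB
  have hAm : ∀ θ, MeasurableSet (A θ) := fun θ =>
    (hc (measurableSet_singleton θ)).inter measurableSet_Icc
  have hBm : ∀ θ, MeasurableSet (B θ) := fun θ =>
    ((hc'.comp hσm) (measurableSet_singleton θ)).inter measurableSet_Icc
  have hfinA : ∀ θ, volume (A θ) ≠ ⊤ := fun θ => vol_finite _
  have hfinB : ∀ θ, volume (B θ) ≠ ⊤ := fun θ => vol_finite _
  have hfinD : volume D ≠ ⊤ :=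
    ne_top_of_le_ne_top (vol_finite univ) (measure_mono (fun x hx => ⟨⟨⟩, hx.1⟩))
  -- B θ has same volume as c'⁻¹θ ∩ Icc
  have hBvol : ∀ θ, volume (B θ) = volume (c' ⁻¹' {θ} ∩ Icc (0:ℝ) 1) := by
    intro θ
    have h2 := hmp.measure_preimage
      (hc' (measurableSet_singleton θ)).nullMeasurableSet
    rw [Measure.restrict_apply (hσm (hc' (measurableSet_singleton θ))),
      Measure.restrict_apply (hc' (measurableSet_singleton θ))] at h2
    have h3 : B θ = σ ⁻¹' (c' ⁻¹' {θ}) ∩ Icc 0 1 := rfl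
    rw [h3, h2]
  -- A θ \ D = B θ \ D
  have hdiff : ∀ θ, A θ \ D = B θ \ D := by
    intro θ
    ext x
    simp only [hA, hB, hD, mem_diff, mem_inter_iff, mem_preimage, mem_singleton_iff,
      mem_setOf_eq, not_and, not_not]
    constructor
    · rintro ⟨⟨hcx, hI⟩, hnD⟩
      exact ⟨⟨by rw [← hnD hI, hcx], hI⟩, hnD⟩
    · rintro ⟨⟨hcx, hI⟩, hnD⟩
      exact ⟨⟨by rw [hnD hI, hcx], hI⟩, hnD⟩
  -- decompositions
  have hdecA : ∀ θ, (volume (A θ)).toReal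
      = (volume (A θ \ D)).toReal + (volume (A θ ∩ D)).toReal := by
    intro θ
    rw [← ENNReal.toReal_add (ne_top_of_le_ne_top (hfinA θ) (measure_mono diff_subset))
      (ne_top_of_le_ne_top (hfinA θ) (measure_mono inter_subset_left)), measure_diff_add_inter _ hDm]
  have hdecB : ∀ θ, (volume (B θ)).toReal
      = (volume (B θ \ D)).toReal + (volume (B θ ∩ D)).toReal := by
    intro θ
    rw [← ENNReal.toReal_add (ne_top_of_le_ne_top (hfinB θ) (measure_mono diff_subset))
      (ne_top_of_le_ne_top (hfinB θ) (measure_mono inter_subset_left)), measure_diff_add_inter _ hDm]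
  -- sums over the partition of D
  have hsumA : ∑ θ : Θ, volume (A θ ∩ D) = volume D := by
    rw [← measure_biUnion_finset]
    · congr 1
      ext x
      simp only [mem_iUnion, exists_prop, mem_inter_iff, mem_preimage, mem_singleton_iff]
      constructor
      · rintro ⟨θ, _, ⟨_, _⟩, hxD⟩; exact hxD
      · intro hxD; exact ⟨c x, Finset.mem_univ _, ⟨rfl, hxD.1⟩, hxD⟩
    · intro θ _ θ' _ hne
      apply Disjoint.mono (inter_subset_left.trans inter_subset_left)
        (inter_subset_left.trans inter_subset_left)
      rw [disjoint_left]
      rintro x h1 h2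
      simp only [mem_preimage, mem_singleton_iff] at h1 h2
      exact hne (h1 ▸ h2 ▸ rfl)
    · exact fun θ _ => (hAm θ).inter hDm
  have hsumB : ∑ θ : Θ, volume (B θ ∩ D) = volume D := by
    rw [← measure_biUnion_finset]
    · congr 1
      ext x
      simp only [mem_iUnion, exists_prop, mem_inter_iff, mem_preimage, mem_singleton_iff]
      constructor
      · rintro ⟨θ, _, ⟨_, _⟩, hxD⟩; exact hxD
      · intro hxD; exact ⟨c' (σ x), Finset.mem_univ _, ⟨rfl, hxD.1⟩, hxD⟩
    · intro θ _ θ' _ hne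
      apply Disjoint.mono (inter_subset_left.trans inter_subset_left)
        (inter_subset_left.trans inter_subset_left)
      rw [disjoint_left]
      rintro x h1 h2
      simp only [mem_preimage, mem_singleton_iff] at h1 h2
      exact hne (h1 ▸ h2 ▸ rfl)
    · exact fun θ _ => (hBm θ).inter hDm
  have hsumA' : ∑ θ : Θ, (volume (A θ ∩ D)).toReal = (volume D).toReal := by
    rw [← ENNReal.toReal_sum
      (fun θ _ => ne_top_of_le_ne_top (hfinA θ) (measure_mono inter_subset_left)), hsumA]
  have hsumB' : ∑ θ : Θ, (volume (B θ ∩ D)).toReal = (volume D).toReal := by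
    rw [← ENNReal.toReal_sum
      (fun θ _ => ne_top_of_le_ne_top (hfinB θ) (measure_mono inter_subset_left)), hsumB]
  -- pointwise
  have hpt : ∀ θ : Θ, |(volume (A θ)).toReal - (volume (c' ⁻¹' {θ} ∩ Icc (0:ℝ) 1)).toReal|
      ≤ (volume (A θ ∩ D)).toReal + (volume (B θ ∩ D)).toReal := by
    intro θ
    rw [← hBvol θ, hdecA θ, hdecB θ, hdiff θ]
    have p1 : (0:ℝ) ≤ (volume (A θ ∩ D)).toReal := ENNReal.toReal_nonneg
    have p2 : (0:ℝ) ≤ (volume (B θ ∩ D)).toReal := ENNReal.toReal_nonneg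
    rw [abs_le]
    constructor <;> linarith
  calc ∑ θ : Θ, |(volume (c ⁻¹' {θ} ∩ Icc (0:ℝ) 1)).toReal
        - (volume (c' ⁻¹' {θ} ∩ Icc (0:ℝ) 1)).toReal|
      ≤ ∑ θ : Θ, ((volume (A θ ∩ D)).toReal + (volume (B θ ∩ D)).toReal) :=
        Finset.sum_le_sum (fun θ _ => hpt θ)
    _ = (volume D).toReal + (volume D).toReal := by
        rw [Finset.sum_add_distrib, hsumA', hsumB']
    _ = 2 * (volume D).toReal := by ring

end LowerBound

end
end Stmt17Aux

open scoped ENNReal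
open Stmt17Aux

/-- **Coloring distance (Lemma 4).** For measurable colorings `c, c' : [0,1] → Θ` with
color vectors `w, w'`, the infimum over measure-preserving bijections `σ` of `[0,1]` of
the measure of the disagreement set `{x : c(x) ≠ c'(σ(x))}` equals
`(1/2) ∑_θ |w_θ − w'_θ|`; in particular it depends only on the color vectors and equals
`∑_θ max(w_θ − w'_θ, 0)`. -/
theorem stmt_17 (Θ : Type) [Fintype Θ] [MeasurableSpace Θ] [MeasurableSingletonClass Θ]
    (c c' : ℝ → Θ) (hc : Measurable c) (hc' : Measurable c')
    (w w' : Θ → ℝ)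
    (hw : ∀ θ, w θ = (volume (c ⁻¹' {θ} ∩ Set.Icc (0 : ℝ) 1)).toReal)
    (hw' : ∀ θ, w' θ = (volume (c' ⁻¹' {θ} ∩ Set.Icc (0 : ℝ) 1)).toReal) :
    IsGLB
      {r : ℝ | ∃ σ : ℝ → ℝ,
        Set.BijOn σ (Set.Icc (0 : ℝ) 1) (Set.Icc (0 : ℝ) 1) ∧
        MeasurePreserving σ (volume.restrict (Set.Icc (0 : ℝ) 1))
          (volume.restrict (Set.Icc (0 : ℝ) 1)) ∧
        r = (volume {x ∈ Set.Icc (0 : ℝ) 1 | c x ≠ c' (σ x)}).toReal}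
      ((1 / 2) * ∑ θ, |w θ - w' θ|) ∧
    (1 / 2) * ∑ θ, |w θ - w' θ| = ∑ θ, max (w θ - w' θ) 0 := by
  classical
  -- sum of color vectors agree
  have hfibm : ∀ θ, MeasurableSet (c ⁻¹' {θ} ∩ Set.Icc (0:ℝ) 1) :=
    fun θ => (hc (measurableSet_singleton θ)).inter measurableSet_Icc
  have hfibm' : ∀ θ, MeasurableSet (c' ⁻¹' {θ} ∩ Set.Icc (0:ℝ) 1) :=
    fun θ => (hc' (measurableSet_singleton θ)).inter measurableSet_Icc
  have hsumW : ∀ (f : ℝ → Θ), Measurable f →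
      ∑ θ : Θ, (volume (f ⁻¹' {θ} ∩ Set.Icc (0:ℝ) 1)).toReal = (volume (Set.Icc (0:ℝ) 1)).toReal := by
    intro f hf
    rw [← ENNReal.toReal_sum (fun θ _ => vol_finite _)]
    congr 1
    rw [← measure_biUnion_finset]
    · congr 1
      ext x
      simp only [Set.mem_iUnion, Set.mem_inter_iff, Set.mem_preimage, Set.mem_singleton_iff,
        Finset.mem_univ, exists_prop, true_and]
      exact ⟨fun ⟨θ, _, h⟩ => h, fun h => ⟨f x, rfl, h⟩⟩
    · intro θ _ θ' _ hne
      apply Disjoint.mono Set.inter_subset_left Set.inter_subset_left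
      rw [Set.disjoint_left]
      rintro x h1 h2
      simp only [Set.mem_preimage, Set.mem_singleton_iff] at h1 h2
      exact hne (h1 ▸ h2 ▸ rfl)
    · exact fun θ _ => (hf (measurableSet_singleton θ)).inter measurableSet_Icc
  have hsum : ∑ θ : Θ, w θ = ∑ θ : Θ, w' θ := by
    simp only [hw, hw']
    rw [hsumW c hc, hsumW c' hc']
  have habs : ∀ t : ℝ, |t| = 2 * max t 0 - t := by
    intro t
    rcases le_total 0 t with h | h
    · rw [abs_of_nonneg h, max_eq_left h]; ring
    · rw [abs_of_nonpos h, max_eq_right h]; ring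
  have hhalf : (1 / 2 : ℝ) * ∑ θ, |w θ - w' θ| = ∑ θ, max (w θ - w' θ) 0 := by
    have h1 : ∑ θ : Θ, |w θ - w' θ|
        = ∑ θ : Θ, (2 * max (w θ - w' θ) 0 - (w θ - w' θ)) :=
      Finset.sum_congr rfl (fun θ _ => habs _)
    rw [h1, Finset.sum_sub_distrib]
    have h2 : ∑ θ : Θ, 2 * max (w θ - w' θ) 0 = 2 * ∑ θ : Θ, max (w θ - w' θ) 0 :=
      (Finset.mul_sum _ _ _).symm
    have hz : ∑ θ : Θ, (w θ - w' θ) = 0 := by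
      rw [Finset.sum_sub_distrib, hsum]; ring
    rw [h2, hz]
    ring
  refine ⟨⟨?_, ?_⟩, hhalf⟩
  · -- lower bound
    rintro r ⟨σ, hbij, hmp, rfl⟩
    have hlb := lower_bound c c' hc hc' σ hmp
    simp only [hw, hw']
    linarith
  · -- greatest lower bound
    intro b hb
    rw [hhalf]
    apply le_of_forall_pos_le_add
    intro ε hε
    have hε6 : (0:ℝ) < ε / 6 := by linarith
    obtain ⟨δ₀, hδ₀, happrox⟩ := approx_one c hc hε6
    obtain ⟨δ₀', hδ₀', happrox'⟩ := approx_one c' hc' hε6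
    obtain ⟨n, hn⟩ := exists_nat_one_div_lt (lt_min hδ₀ hδ₀')
    set N := n + 1 with hNdef
    have hN : 0 < N := Nat.succ_pos n
    have hNcast : ((N:ℝ)) = (n:ℝ) + 1 := by push_cast [hNdef]; ring
    have h1N : 1 / (N:ℝ) < min δ₀ δ₀' := by rw [hNcast]; exact hn
    obtain ⟨d, hd⟩ := happrox N hN (h1N.trans_le (min_le_left _ _))
    obtain ⟨d', hd'⟩ := happrox' N hN (h1N.trans_le (min_le_right _ _))
    obtain ⟨e, he, hecard⟩ := comb (J N).card (J N) rfl d d'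
    set σ := T N ⇑e with hσdef
    have hmp := T_measurePreserving e hN he
    have hbij := T_bijOn e hN he
    set r := (volume {x ∈ Set.Icc (0:ℝ) 1 | c x ≠ c' (σ x)}).toReal with hrdef
    have hble : b ≤ r := hb ⟨σ, hbij, hmp, rfl⟩
    -- counts
    set nn : Θ → ℕ := fun θ => ((J N).filter fun k => d k = θ).card with hnn
    set nn' : Θ → ℕ := fun θ => ((J N).filter fun k => d' k = θ).card with hnn'
    set mis : ℕ := ((J N).filter fun k => d k ≠ d' (e k)).card with hmis
    -- the three bad sets
    set G1 := {x ∈ Set.Icc (0:ℝ) 1 | c x ≠ d (flr N x)} with hG1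
    set G1' := {x ∈ Set.Icc (0:ℝ) 1 | c' x ≠ d' (flr N x)} with hG1'
    set G2 := {x ∈ Set.Icc (0:ℝ) 1 | d (flr N x) ≠ d' (e (flr N x))} with hG2
    set G3 := {x ∈ Set.Icc (0:ℝ) 1 | c' (σ x) ≠ d' (e (flr N x))} with hG3
    have hmeasflr : ∀ (q : ℤ → Θ), Measurable (fun x : ℝ => q (flr N x)) :=
      fun q => Measurable.comp (fun _ _ => trivial) (measurable_flr N)
    have hG2vol : volume G2 = (mis : ℝ≥0∞) * ENNReal.ofReal (1/(N:ℝ)) := by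
      rw [hG2, hmis]
      convert volume_step hN (fun k => d k ≠ d' (e k)) using 3
      exact congrArg Finset.card
        (@Finset.filter_congr_decidable _ (J N) (fun k => d k ≠ d' (e k)) _
          (fun k => Classical.propDecidable _))
    have hmisc : (0:ℝ) ≤ (mis:ℝ) := Nat.cast_nonneg _
    have hmis0 : (0:ℝ) ≤ (mis:ℝ)/N := div_nonneg hmisc (Nat.cast_nonneg _)
    have hG3vol : volume G3 = volume G1' := by
      have hSbadm : MeasurableSet {y : ℝ | c' y ≠ d' (flr N y)} :=
        measurableSet_ne' hc' (hmeasflr d')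
      have hset : G3 = σ ⁻¹' {y : ℝ | c' y ≠ d' (flr N y)} ∩ Set.Icc (0:ℝ) 1 := by
        ext x
        simp only [hG3, Set.mem_setOf_eq, Set.mem_inter_iff, Set.mem_preimage]
        rw [hσdef, flr_T hN]
        tauto
      have hset' : G1' = {y : ℝ | c' y ≠ d' (flr N y)} ∩ Set.Icc (0:ℝ) 1 := by
        ext x
        simp only [hG1', Set.mem_setOf_eq, Set.mem_inter_iff]
        tauto
      have h2 := hmp.measure_preimage hSbadm.nullMeasurableSet
      rw [Measure.restrict_apply (hmp.measurable hSbadm), Measure.restrict_apply hSbadm] at h2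
      rw [hset, hset', h2]
    have hcover : {x ∈ Set.Icc (0:ℝ) 1 | c x ≠ c' (σ x)} ⊆ G1 ∪ G2 ∪ G3 := by
      rintro x ⟨hxI, hxne⟩
      by_cases h1 : c x = d (flr N x)
      · by_cases h2 : d (flr N x) = d' (e (flr N x))
        · refine Or.inr ⟨hxI, ?_⟩
          intro h3
          exact hxne (by rw [h1, h2, ← h3])
        · exact Or.inl (Or.inr ⟨hxI, h2⟩)
      · exact Or.inl (Or.inl ⟨hxI, h1⟩)
    -- volume bound
    have hvol : volume {x ∈ Set.Icc (0:ℝ) 1 | c x ≠ c' (σ x)}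
        ≤ ENNReal.ofReal (ε/6 + ((mis:ℝ)/N + ε/6)) := by
      calc volume {x ∈ Set.Icc (0:ℝ) 1 | c x ≠ c' (σ x)}
          ≤ volume (G1 ∪ G2 ∪ G3) := measure_mono hcover
        _ ≤ volume G1 + (volume G2 + volume G3) := by
            refine (measure_union_le _ _).trans ?_
            exact add_le_add (measure_union_le _ _) le_rfl |>.trans (by rw [add_assoc])
        _ ≤ ENNReal.ofReal (ε/6) + (ENNReal.ofReal ((mis:ℝ)/N) + ENNReal.ofReal (ε/6)) := by
            refine add_le_add hd (add_le_add ?_ (hG3vol ▸ hd'))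
            rw [hG2vol, ← ENNReal.ofReal_natCast mis, ← ENNReal.ofReal_mul hmisc]
            apply le_of_eq
            congr 1
            field_simp
        _ = ENNReal.ofReal (ε/6 + ((mis:ℝ)/N + ε/6)) := by
            rw [ENNReal.ofReal_add hε6.le (add_nonneg hmis0 hε6.le),
              ENNReal.ofReal_add hmis0 hε6.le]
    have hr1 : r ≤ ε/6 + ((mis:ℝ)/N + ε/6) :=
      ENNReal.toReal_le_of_le_ofReal (by linarith) hvol
    -- counting bound
    set v : Θ → ℝ := fun θ => (volume {x ∈ Set.Icc (0:ℝ) 1 | d (flr N x) = θ}).toReal with hv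
    set v' : Θ → ℝ := fun θ => (volume {x ∈ Set.Icc (0:ℝ) 1 | d' (flr N x) = θ}).toReal with hv'
    have hveq : ∀ θ, v θ = (nn θ : ℝ) / N := by
      intro θ
      rw [hv]
      simp only
      rw [volume_step hN (fun k => d k = θ), ENNReal.toReal_mul,
        ENNReal.toReal_ofReal (by positivity), show ((((J N).filter fun k => d k = θ).card : ℝ≥0∞)).toReal
          = ((((J N).filter fun k => d k = θ).card : ℕ) : ℝ) from rfl]
      rw [hnn]
      field_simp
    have hveq' : ∀ θ, v' θ = (nn' θ : ℝ) / N := by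
      intro θ
      rw [hv']
      simp only
      rw [volume_step hN (fun k => d' k = θ), ENNReal.toReal_mul,
        ENNReal.toReal_ofReal (by positivity), show ((((J N).filter fun k => d' k = θ).card : ℝ≥0∞)).toReal
          = ((((J N).filter fun k => d' k = θ).card : ℕ) : ℝ) from rfl]
      rw [hnn']
      field_simp
    have hmisN : (mis:ℝ)/N ≤ ∑ θ : Θ, max (v θ - v' θ) 0 := by
      have hc1 : (mis:ℝ) ≤ ((∑ θ : Θ, (nn θ - nn' θ) : ℕ) : ℝ) := by
        exact_mod_cast hecard
      have hc2 : ((∑ θ : Θ, (nn θ - nn' θ) : ℕ) : ℝ) = ∑ θ : Θ, max ((nn θ:ℝ) - (nn' θ:ℝ)) 0 := by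
        rw [Nat.cast_sum]
        apply Finset.sum_congr rfl
        intro θ _
        rcases le_total (nn' θ) (nn θ) with h | h
        · rw [Nat.cast_sub h, max_eq_left (by simp only [sub_nonneg]; exact_mod_cast h)]
        · rw [Nat.sub_eq_zero_of_le h, max_eq_right (by simp only [sub_nonpos]; exact_mod_cast h)]
          simp
      have hN' : (0:ℝ) < N := by exact_mod_cast hN
      calc (mis:ℝ)/N ≤ (∑ θ : Θ, max ((nn θ:ℝ) - (nn' θ:ℝ)) 0) / N := by
            gcongr
            rw [← hc2]; exact hc1
        _ = ∑ θ : Θ, max (v θ - v' θ) 0 := by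
            rw [Finset.sum_div]
            apply Finset.sum_congr rfl
            intro θ _
            rw [hveq θ, hveq' θ, ← sub_div, ← max_div_div_right hN'.le, zero_div]
    -- compare v with w
    have hwv : ∀ θ, w θ = (volume {x ∈ Set.Icc (0:ℝ) 1 | c x = θ}).toReal := by
      intro θ
      rw [hw]
      congr 2
      ext x
      simp only [Set.mem_inter_iff, Set.mem_preimage, Set.mem_singleton_iff, Set.mem_setOf_eq]
      tauto
    have hwv' : ∀ θ, w' θ = (volume {x ∈ Set.Icc (0:ℝ) 1 | c' x = θ}).toReal := by
      intro θ
      rw [hw']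
      congr 2
      ext x
      simp only [Set.mem_inter_iff, Set.mem_preimage, Set.mem_singleton_iff, Set.mem_setOf_eq]
      tauto
    have hdiff1 : ∑ θ : Θ, |w θ - v θ| ≤ 2 * (ε/6) := by
      have hs := sum_abs_le hc (hmeasflr d)
      have hG1r : (volume G1).toReal ≤ ε/6 := ENNReal.toReal_le_of_le_ofReal hε6.le hd
      calc ∑ θ : Θ, |w θ - v θ|
          = ∑ θ : Θ, |(volume {x ∈ Set.Icc (0:ℝ) 1 | c x = θ}).toReal
            - (volume {x ∈ Set.Icc (0:ℝ) 1 | d (flr N x) = θ}).toReal| := by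
            apply Finset.sum_congr rfl
            intro θ _
            rw [hwv θ, hv]
        _ ≤ 2 * (volume {x ∈ Set.Icc (0:ℝ) 1 | c x ≠ d (flr N x)}).toReal := hs
        _ ≤ 2 * (ε/6) := by rw [← hG1]; linarith [hG1r]
    have hdiff2 : ∑ θ : Θ, |w' θ - v' θ| ≤ 2 * (ε/6) := by
      have hs := sum_abs_le hc' (hmeasflr d')
      have hG1r : (volume G1').toReal ≤ ε/6 := ENNReal.toReal_le_of_le_ofReal hε6.le hd'
      calc ∑ θ : Θ, |w' θ - v' θ|
          = ∑ θ : Θ, |(volume {x ∈ Set.Icc (0:ℝ) 1 | c' x = θ}).toReal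
            - (volume {x ∈ Set.Icc (0:ℝ) 1 | d' (flr N x) = θ}).toReal| := by
            apply Finset.sum_congr rfl
            intro θ _
            rw [hwv' θ, hv']
        _ ≤ 2 * (volume {x ∈ Set.Icc (0:ℝ) 1 | c' x ≠ d' (flr N x)}).toReal := hs
        _ ≤ 2 * (ε/6) := by rw [← hG1']; linarith [hG1r]
    -- pointwise max comparison
    have hptmax : ∑ θ : Θ, max (v θ - v' θ) 0
        ≤ ∑ θ : Θ, max (w θ - w' θ) 0 + (∑ θ : Θ, |w θ - v θ| + ∑ θ : Θ, |w' θ - v' θ|) := by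
      rw [← Finset.sum_add_distrib, ← Finset.sum_add_distrib]
      apply Finset.sum_le_sum
      intro θ _
      apply max_le
      · have h1 : v θ - w θ ≤ |w θ - v θ| := by
          rw [abs_sub_comm]; exact le_abs_self _
        have h2 : w' θ - v' θ ≤ |w' θ - v' θ| := le_abs_self _
        have h3 : w θ - w' θ ≤ max (w θ - w' θ) 0 := le_max_left _ _
        linarith
      · have : (0:ℝ) ≤ max (w θ - w' θ) 0 := le_max_right _ _
        have := abs_nonneg (w θ - v θ)
        have := abs_nonneg (w' θ - v' θ)
        linarith
    have hfinal : r ≤ ∑ θ : Θ, max (w θ - w' θ) 0 + ε := by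
      have := hmisN.trans hptmax
      linarith [hr1, hdiff1, hdiff2]
    linarith [hble, hfinal]
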